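/- For all positive integers r and n, the following identity holds in the ring of formal power series in t with coefficients in ℤ[q,u]: (∑_{k ≥ 0} ([k+1]_q + u·[r−1]_u·[k]_q)^n t^k) · ∏_{j=0}^{n} (1 − q^j t) = ∑_{(ε,π) ∈ ℤ_r ≀ 𝔖_n} q^{maj(ε,π)} t^{des(ε,π)} u^{col(ε)}. -/

import Mathlib

open Finset

/-- 1-based value of `π` at position `i ∈ {1,…,n}`, with the convention `π(0) = 0`. -/
def wval {n : ℕ} (π : Equiv.Perm (Fin n)) (i : ℕ) : ℕ :=
  if h : 1 ≤ i ∧ i ≤ n then (π ⟨i - 1, by omega⟩ : ℕ) + 1 else 0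

/-- Color at position `i` (1-based), with the convention `ε_0 = 0`. -/
def wcolor {n : ℕ} (ε : Fin n → ℕ) (i : ℕ) : ℕ :=
  if h : 1 ≤ i ∧ i ≤ n then ε ⟨i - 1, by omega⟩ else 0

/-- The Biagioli–Zeng order on colored letters: `(j,c) > (k,d)`. -/
def bzGT (a b : ℕ × ℕ) : Prop :=
  (a.2 = 0 ∧ b.2 = 0 ∧ b.1 < a.1) ∨ (0 < a.2 ∧ 0 < b.2 ∧ a.1 < b.1) ∨ (a.2 = 0 ∧ 0 < b.2)

instance (a b : ℕ × ℕ) : Decidable (bzGT a b) := by unfold bzGT; exact inferInstance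

/-- The descent set `Des(ε,π) ⊆ {0,…,n-1}` of a colored permutation. -/
def DesBZ {n : ℕ} (ε : Fin n → ℕ) (π : Equiv.Perm (Fin n)) : Finset ℕ :=
  (Finset.range n).filter fun i =>
    bzGT (wval π i, wcolor ε i) (wval π (i + 1), wcolor ε (i + 1))

def desBZ {n : ℕ} (ε : Fin n → ℕ) (π : Equiv.Perm (Fin n)) : ℕ := (DesBZ ε π).card

def majBZ {n : ℕ} (ε : Fin n → ℕ) (π : Equiv.Perm (Fin n)) : ℕ := ∑ i ∈ DesBZ ε π, i

/-- The color weight `col(ε)`. -/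
def colwt {n : ℕ} (ε : Fin n → ℕ) : ℕ := ∑ i, ε i

/-- Ordinary descent set `{i ∈ {1,…,n-1} : σ(i) > σ(i+1)}` (1-based). -/
def ordDes {n : ℕ} (σ : Equiv.Perm (Fin n)) : Finset ℕ :=
  (Finset.range n).filter fun i => 1 ≤ i ∧ wval σ (i + 1) < wval σ i

noncomputable def qP : MvPolynomial (Fin 2) ℤ := MvPolynomial.X 0
noncomputable def uP : MvPolynomial (Fin 2) ℤ := MvPolynomial.X 1
noncomputable def qNat (m : ℕ) : MvPolynomial (Fin 2) ℤ := ∑ i ∈ Finset.range m, qP ^ i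
noncomputable def uNat (m : ℕ) : MvPolynomial (Fin 2) ℤ := ∑ i ∈ Finset.range m, uP ^ i

/-- The monomial `m'(j,k)`. -/
noncomputable def mPrime (j k : ℕ) : MvPolynomial (Fin 2) ℤ :=
  if j ≤ k then qP ^ j else qP ^ ((j - 1) % k) * uP ^ ((j - 1) / k)

/-- Lattice points of `cone(F_ε)` at height `k`. -/
def Lset {n : ℕ} (ε : Fin n → ℕ) (k : ℕ) : Finset (Fin n → ℕ) :=
  Fintype.piFinset fun i =>
    if 0 < ε i then Finset.Ioc (k * ε i) (k * (ε i + 1)) else Finset.Icc 0 k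

namespace BZ

abbrev R := MvPolynomial (Fin 2) ℤ

noncomputable def geom (a : R) : PowerSeries R := PowerSeries.mk fun m => a ^ m

lemma one_sub_mul_geom (a : R) :
    (1 - PowerSeries.C a * PowerSeries.X) * geom a = 1 := by
  ext k
  rw [sub_mul, one_mul, mul_assoc, map_sub, PowerSeries.coeff_C_mul]
  cases k with
  | zero => simp [geom, PowerSeries.coeff_zero_eq_constantCoeff]
  | succ k =>
      rw [PowerSeries.coeff_succ_X_mul]
      simp [geom, PowerSeries.coeff_mk, pow_succ, mul_comm]

noncomputable def Pinv (n : ℕ) : PowerSeries R := ∏ j ∈ range (n + 1), geom (qP ^ j)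

lemma prod_mul_Pinv (n : ℕ) :
    (∏ j ∈ range (n + 1), (1 - PowerSeries.C (qP ^ j) * PowerSeries.X)) * Pinv n = 1 := by
  rw [Pinv, ← prod_mul_distrib]
  exact Finset.prod_eq_one fun j _ => one_sub_mul_geom _

/-- weakly decreasing `n`-tuples with entries at most `m`. -/
def Dset (n m : ℕ) : Finset (Fin n → ℕ) :=
  (Fintype.piFinset fun _ => Finset.range (m + 1)).filter
    fun b => ∀ p q : Fin n, p ≤ q → b q ≤ b p

lemma mem_Dset {n m : ℕ} {b : Fin n → ℕ} :
    b ∈ Dset n m ↔ (∀ p, b p ≤ m) ∧ ∀ p q : Fin n, p ≤ q → b q ≤ b p := by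
  simp [Dset, Fintype.mem_piFinset, Nat.lt_succ_iff]

lemma coeff_Pinv (n : ℕ) : ∀ m, PowerSeries.coeff m (Pinv n) =
    ∑ b ∈ Dset n m, qP ^ (∑ p, b p) := by
  induction n with
  | zero =>
      intro m
      have h1 : Dset 0 m = {fun p : Fin 0 => 0} := by
        ext b
        simp [mem_Dset, funext_iff, Fin.forall_fin_zero_pi]
      simp [Pinv, h1, geom, PowerSeries.coeff_mk]
  | succ N ih =>
      intro m
      rw [Pinv, Finset.prod_range_succ, ← Pinv, PowerSeries.coeff_mul]
      simp only [geom, PowerSeries.coeff_mk, ih, Finset.sum_mul]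
      rw [Finset.sum_sigma']
      refine Finset.sum_nbij' (fun x => Fin.snoc (fun p => x.2 p + x.1.2) x.1.2)
        (fun b => ⟨(m - b (Fin.last N), b (Fin.last N)), fun p => b p.castSucc - b (Fin.last N)⟩)
        ?_ ?_ ?_ ?_ ?_
      · rintro ⟨⟨s, t⟩, b'⟩ hx
        rw [Finset.mem_sigma, Finset.HasAntidiagonal.mem_antidiagonal] at hx
        obtain ⟨hst, hb'⟩ := hx
        rw [mem_Dset] at hb'
        obtain ⟨hb1, hb2⟩ := hb'
        dsimp only at hst hb1 hb2 ⊢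
        rw [mem_Dset]
        constructor
        · intro p
          by_cases hp : (p : ℕ) < N
          · have ep : p = Fin.castSucc ⟨p, hp⟩ := by ext; simp
            rw [ep, Fin.snoc_castSucc]
            have := hb1 ⟨p, hp⟩
            omega
          · have ep : p = Fin.last N := by ext; simp at hp ⊢; omega
            rw [ep, Fin.snoc_last]
            omega
        · intro p q hpq
          have hple : (p : ℕ) ≤ (q : ℕ) := hpq
          by_cases hq : (q : ℕ) < N
          · have hp : (p : ℕ) < N := lt_of_le_of_lt hple hq
            have ep : p = Fin.castSucc ⟨p, hp⟩ := by ext; simp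
            have eq' : q = Fin.castSucc ⟨q, hq⟩ := by ext; simp
            rw [ep, eq', Fin.snoc_castSucc, Fin.snoc_castSucc]
            exact Nat.add_le_add_right (hb2 _ _ hple) t
          · have eq' : q = Fin.last N := by ext; simp at hq ⊢; omega
            rw [eq', Fin.snoc_last]
            by_cases hp : (p : ℕ) < N
            · have ep : p = Fin.castSucc ⟨p, hp⟩ := by ext; simp
              rw [ep, Fin.snoc_castSucc]
              omega
            · have ep : p = Fin.last N := by ext; simp at hp ⊢; omega
              rw [ep, Fin.snoc_last]
      · intro b hb
        rw [mem_Dset] at hb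
        obtain ⟨hb1, hb2⟩ := hb
        rw [Finset.mem_sigma, Finset.HasAntidiagonal.mem_antidiagonal]
        refine ⟨by dsimp only; have := hb1 (Fin.last N); omega, ?_⟩
        rw [mem_Dset]
        dsimp only
        exact ⟨fun p => Nat.sub_le_sub_right (hb1 _) _,
          fun p q hpq => Nat.sub_le_sub_right (hb2 _ _ (by exact hpq)) _⟩
      · rintro ⟨⟨s, t⟩, b'⟩ hx
        rw [Finset.mem_sigma, Finset.HasAntidiagonal.mem_antidiagonal] at hx
        obtain ⟨hst, -⟩ := hx
        dsimp only at hst ⊢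
        simp only [Fin.snoc_castSucc, Fin.snoc_last]
        have h1 : m - t = s := by omega
        rw [h1]
        congr 1
        funext p
        omega
      · intro b hb
        rw [mem_Dset] at hb
        funext p
        dsimp only
        by_cases hp : (p : ℕ) < N
        · have ep : p = Fin.castSucc ⟨p, hp⟩ := by ext; simp
          rw [ep, Fin.snoc_castSucc]
          have := hb.2 (Fin.castSucc ⟨p, hp⟩) (Fin.last N) (Fin.le_last _)
          omega
        · have ep : p = Fin.last N := by ext; simp at hp ⊢; omega
          rw [ep, Fin.snoc_last]
      · rintro ⟨⟨s, t⟩, b'⟩ hx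
        dsimp only
        rw [← pow_mul, ← pow_add]
        congr 1
        rw [Fin.sum_univ_castSucc]
        simp only [Fin.snoc_castSucc, Fin.snoc_last, Finset.sum_add_distrib,
          Finset.sum_const, Finset.card_univ, Fintype.card_fin, smul_eq_mul]
        ring


section Comb

variable {n : ℕ}

def brank (n : ℕ) (j : Fin n) (c : ℕ) : ℕ := if c = 0 then n + 1 + (j : ℕ) else n - (j : ℕ)

lemma brank_le (j : Fin n) (c : ℕ) : brank n j c ≤ 2 * n := by
  have := j.isLt; unfold brank; split <;> omega

lemma brank_pos (j : Fin n) (c : ℕ) : 1 ≤ brank n j c := by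
  have := j.isLt; unfold brank; split <;> omega

lemma brank_injective {j j' : Fin n} {c c' : ℕ} (h : brank n j c = brank n j' c') : j = j' := by
  have h1 := j.isLt; have h2 := j'.isLt
  unfold brank at h
  split_ifs at h <;> exact Fin.ext (by omega)

lemma bzGT_iff_brank {j j' : Fin n} (hne : j ≠ j') (c c' : ℕ) :
    bzGT ((j : ℕ) + 1, c) ((j' : ℕ) + 1, c') ↔ brank n j' c' < brank n j c := by
  have h1 := j.isLt; have h2 := j'.isLt
  have hne' : (j : ℕ) ≠ (j' : ℕ) := fun h => hne (Fin.ext h)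
  unfold bzGT brank
  dsimp only
  split_ifs <;> omega

lemma mem_DesBZ_zero (hn : 0 < n) (ε : Fin n → ℕ) (π : Equiv.Perm (Fin n)) :
    0 ∈ DesBZ ε π ↔ 0 < ε ⟨0, hn⟩ := by
  unfold DesBZ
  rw [Finset.mem_filter, Finset.mem_range]
  unfold wval wcolor
  have h0 : ¬(1 ≤ 0 ∧ 0 ≤ n) := by omega
  have h1 : 1 ≤ 0 + 1 ∧ 0 + 1 ≤ n := by omega
  rw [dif_neg h0, dif_neg h0, dif_pos h1, dif_pos h1]
  unfold bzGT
  dsimp only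
  constructor
  · rintro ⟨-, h | h | h⟩
    · exact absurd h.2.2 (by omega)
    · exact absurd h.1 (by omega)
    · exact h.2
  · intro h
    exact ⟨hn, Or.inr (Or.inr ⟨rfl, h⟩)⟩

lemma mem_DesBZ_succ (ε : Fin n → ℕ) (π : Equiv.Perm (Fin n)) (p : ℕ) (h : p + 1 < n) :
    p + 1 ∈ DesBZ ε π ↔
      brank n (π ⟨p + 1, h⟩) (ε ⟨p + 1, h⟩) < brank n (π ⟨p, by omega⟩) (ε ⟨p, by omega⟩) := by
  unfold DesBZ
  rw [Finset.mem_filter, Finset.mem_range]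
  unfold wval wcolor
  have h1 : 1 ≤ p + 1 ∧ p + 1 ≤ n := by omega
  have h2 : 1 ≤ p + 1 + 1 ∧ p + 1 + 1 ≤ n := by omega
  rw [dif_pos h1, dif_pos h1, dif_pos h2, dif_pos h2]
  have hne : π ⟨p + 1 - 1, by omega⟩ ≠ π ⟨p + 1 + 1 - 1, by omega⟩ := by
    intro hcon
    have := π.injective hcon
    simp only [Fin.mk.injEq] at this
    omega
  rw [bzGT_iff_brank hne]
  have e1 : (⟨p + 1 - 1, by omega⟩ : Fin n) = ⟨p, by omega⟩ := rfl
  have e2 : (⟨p + 1 + 1 - 1, by omega⟩ : Fin n) = ⟨p + 1, h⟩ := rfl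
  rw [e1, e2]
  constructor
  · rintro ⟨-, h⟩; exact h
  · intro hh; exact ⟨h, hh⟩

def Dd (ε : Fin n → ℕ) (π : Equiv.Perm (Fin n)) (p : ℕ) : ℕ :=
  ((DesBZ ε π).filter fun i => p + 1 ≤ i).card

lemma DesBZ_mem_lt {ε : Fin n → ℕ} {π : Equiv.Perm (Fin n)} {i : ℕ} (h : i ∈ DesBZ ε π) :
    i < n := Finset.mem_range.mp (Finset.mem_filter.mp h).1

lemma Dd_succ (ε : Fin n → ℕ) (π : Equiv.Perm (Fin n)) (p : ℕ) :
    Dd ε π p = Dd ε π (p + 1) + (if p + 1 ∈ DesBZ ε π then 1 else 0) := by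
  unfold Dd
  have hsp : (DesBZ ε π).filter (fun i => p + 1 ≤ i) =
      ((DesBZ ε π).filter fun i => p + 2 ≤ i) ∪ ((DesBZ ε π).filter fun i => i = p + 1) := by
    ext i
    simp only [Finset.mem_filter, Finset.mem_union]
    constructor
    · rintro ⟨hi, hle⟩
      rcases Nat.eq_or_lt_of_le hle with h | h
      · exact Or.inr ⟨hi, h.symm⟩
      · exact Or.inl ⟨hi, by omega⟩
    · rintro (⟨hi, hle⟩ | ⟨hi, he⟩)
      · exact ⟨hi, by omega⟩
      · exact ⟨hi, by omega⟩
  have hdisj : Disjoint ((DesBZ ε π).filter fun i => p + 2 ≤ i)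
      ((DesBZ ε π).filter fun i => i = p + 1) := by
    rw [Finset.disjoint_filter]
    intro i hi h1 h2
    omega
  rw [hsp, Finset.card_union_of_disjoint hdisj]
  congr 1
  rw [Finset.filter_eq']
  split_ifs with h <;> simp [h]

lemma Dd_eq_zero {ε : Fin n → ℕ} {π : Equiv.Perm (Fin n)} {p : ℕ} (h : n ≤ p + 1) :
    Dd ε π p = 0 := by
  unfold Dd
  rw [Finset.card_eq_zero, Finset.filter_eq_empty_iff]
  intro i hi
  have := DesBZ_mem_lt hi
  omega

lemma desBZ_eq (ε : Fin n → ℕ) (π : Equiv.Perm (Fin n)) :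
    desBZ ε π = Dd ε π 0 + (if 0 ∈ DesBZ ε π then 1 else 0) := by
  unfold desBZ Dd
  have hsp : DesBZ ε π =
      ((DesBZ ε π).filter fun i => 0 + 1 ≤ i) ∪ ((DesBZ ε π).filter fun i => i = 0) := by
    ext i
    simp only [Finset.mem_filter, Finset.mem_union]
    constructor
    · intro hi
      rcases Nat.eq_zero_or_pos i with h | h
      · exact Or.inr ⟨hi, h⟩
      · exact Or.inl ⟨hi, by omega⟩
    · rintro (⟨hi, -⟩ | ⟨hi, -⟩) <;> exact hi
  have hdisj : Disjoint ((DesBZ ε π).filter fun i => 0 + 1 ≤ i)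
      ((DesBZ ε π).filter fun i => i = 0) := by
    rw [Finset.disjoint_filter]
    intro i hi h1 h2
    omega
  conv_lhs => rw [hsp]
  rw [Finset.card_union_of_disjoint hdisj]
  congr 1
  rw [Finset.filter_eq']
  split_ifs with h <;> simp [h]

lemma sum_Dd (ε : Fin n → ℕ) (π : Equiv.Perm (Fin n)) :
    ∑ p ∈ Finset.range n, Dd ε π p = majBZ ε π := by
  unfold Dd majBZ
  have h1 : ∀ p, ((DesBZ ε π).filter fun i => p + 1 ≤ i).card
      = ∑ i ∈ DesBZ ε π, if p + 1 ≤ i then 1 else 0 := by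
    intro p
    rw [Finset.card_filter]
  simp only [h1]
  rw [Finset.sum_comm]
  refine Finset.sum_congr rfl fun i hi => ?_
  have hin := DesBZ_mem_lt hi
  have h2 : (Finset.range n).filter (fun p => p + 1 ≤ i) = Finset.range i := by
    ext x
    simp only [Finset.mem_filter, Finset.mem_range]
    omega
  calc ∑ p ∈ Finset.range n, (if p + 1 ≤ i then 1 else 0)
      = ((Finset.range n).filter fun p => p + 1 ≤ i).card := (Finset.card_filter _ _).symm
    _ = i := by rw [h2, Finset.card_range]

end Comb


section Chain

variable {n k : ℕ} {ε : Fin n → ℕ} {π : Equiv.Perm (Fin n)} {a : Fin n → ℕ}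

lemma antitone_of_chain {f : Fin n → ℕ}
    (h : ∀ (p : ℕ) (hp : p + 1 < n), f ⟨p + 1, hp⟩ ≤ f ⟨p, by omega⟩) :
    ∀ p q : Fin n, p ≤ q → f q ≤ f p := by
  have key : ∀ (d p : ℕ) (hq : p + d < n), f ⟨p + d, hq⟩ ≤ f ⟨p, by omega⟩ := by
    intro d
    induction d with
    | zero => intro p hq; exact le_of_eq rfl
    | succ d ih =>
        intro p hq
        exact le_trans (h (p + d) hq) (ih p (by omega))
  intro p q hpq
  have e : q = ⟨(p : ℕ) + ((q : ℕ) - (p : ℕ)), by omega⟩ := Fin.ext (by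
    simp only []
    have : (p : ℕ) ≤ (q : ℕ) := hpq
    omega)
  rw [e]
  exact key _ _ _

lemma strictMono_of_chain {f : Fin n → ℕ}
    (h : ∀ (p : ℕ) (hp : p + 1 < n), f ⟨p, by omega⟩ < f ⟨p + 1, hp⟩) :
    StrictMono f := by
  have key : ∀ (d p : ℕ) (hq : p + d + 1 < n), f ⟨p, by omega⟩ < f ⟨p + d + 1, hq⟩ := by
    intro d
    induction d with
    | zero => intro p hq; exact h p hq
    | succ d ih =>
        intro p hq
        exact lt_trans (ih p (by omega)) (h (p + d + 1) hq)
  intro p q hpq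
  have hlt : (p : ℕ) < (q : ℕ) := hpq
  have e : q = ⟨(p : ℕ) + ((q : ℕ) - (p : ℕ) - 1) + 1, by omega⟩ := Fin.ext (by
    simp only []
    omega)
  rw [e]
  exact key _ _ _

/-- The chain condition on position values. -/
def Chain (ε : Fin n → ℕ) (π : Equiv.Perm (Fin n)) (a : Fin n → ℕ) : Prop :=
  ∀ (p : ℕ) (hp : p + 1 < n),
    a ⟨p + 1, hp⟩ + (if p + 1 ∈ DesBZ ε π then 1 else 0) ≤ a ⟨p, by omega⟩

lemma bounds_of_chain (hn : 0 < n) (hch : Chain ε π a) (h0 : a ⟨0, hn⟩ ≤ k)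
    (h0' : 0 < ε ⟨0, hn⟩ → a ⟨0, hn⟩ < k) :
    ∀ (p : ℕ) (hp : p < n), a ⟨p, hp⟩ ≤ k ∧ (0 < ε ⟨p, hp⟩ → a ⟨p, hp⟩ < k) := by
  intro p
  induction p with
  | zero => intro hp; exact ⟨h0, h0'⟩
  | succ p ih =>
      intro hp
      have hp' : p < n := by omega
      obtain ⟨ih1, ih2⟩ := ih hp'
      have hch' := hch p hp
      constructor
      · split_ifs at hch' <;> omega
      · intro hcol
        by_cases hdes : p + 1 ∈ DesBZ ε π
        · rw [if_pos hdes] at hch'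
          omega
        · rw [if_neg hdes] at hch'
          rw [mem_DesBZ_succ ε π p hp] at hdes
          push_neg at hdes
          have hεp : 0 < ε ⟨p, hp'⟩ := by
            by_contra hc
            push_neg at hc
            have hc0 : ε (⟨p, by omega⟩ : Fin n) = 0 := by omega
            unfold brank at hdes
            rw [if_pos hc0, if_neg (by omega : ¬ ε (⟨p + 1, hp⟩ : Fin n) = 0)] at hdes
            have := (π (⟨p + 1, hp⟩ : Fin n)).isLt
            have := (π (⟨p, by omega⟩ : Fin n)).isLt
            omega
          have := ih2 hεp
          omega

lemma Dd_le_of_chain (hch : Chain ε π a) : ∀ (p : ℕ) (hp : p < n), Dd ε π p ≤ a ⟨p, hp⟩ := by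
  suffices key : ∀ (t p : ℕ) (hp : p < n), n - 1 - p ≤ t → Dd ε π p ≤ a ⟨p, hp⟩ by
    intro p hp
    exact key (n - 1 - p) p hp le_rfl
  intro t
  induction t with
  | zero =>
      intro p hp h
      rw [Dd_eq_zero (by omega)]
      exact Nat.zero_le _
  | succ t ih =>
      intro p hp h
      by_cases hpn : p + 1 < n
      · have h1 := hch p hpn
        have h2 := ih (p + 1) hpn (by omega)
        rw [Dd_succ]
        split_ifs at h1 ⊢ <;> omega
      · rw [Dd_eq_zero (by omega)]
        exact Nat.zero_le _

end Chain

section CsetSec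

def Cset (r k : ℕ) : Finset (ℕ × ℕ) :=
  ((Finset.range r) ×ˢ (Finset.range (k + 1))).filter fun x => x.1 = 0 ∨ x.2 < k

lemma mem_Cset {r k : ℕ} {x : ℕ × ℕ} :
    x ∈ Cset r k ↔ x.1 < r ∧ x.2 ≤ k ∧ (x.1 = 0 ∨ x.2 < k) := by
  simp only [Cset, Finset.mem_filter, Finset.mem_product, Finset.mem_range, Nat.lt_succ_iff]
  tauto

lemma cset_sum (r k : ℕ) (hr : 0 < r) :
    qNat (k + 1) + uP * uNat (r - 1) * qNat k = ∑ x ∈ Cset r k, uP ^ x.1 * qP ^ x.2 := by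
  have hsplit : Cset r k =
      (({0} : Finset ℕ) ×ˢ Finset.range (k + 1)) ∪ ((Finset.Ico 1 r) ×ˢ Finset.range k) := by
    ext x
    simp only [Cset, Finset.mem_filter, Finset.mem_product, Finset.mem_range, Finset.mem_union,
      Finset.mem_singleton, Finset.mem_Ico]
    omega
  have hdisj : Disjoint (({0} : Finset ℕ) ×ˢ Finset.range (k + 1))
      ((Finset.Ico 1 r) ×ˢ Finset.range k) := by
    rw [Finset.disjoint_left]
    rintro ⟨x1, x2⟩ h1 h2
    simp only [Finset.mem_product, Finset.mem_singleton, Finset.mem_Ico] at h1 h2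
    omega
  rw [hsplit, Finset.sum_union hdisj]
  congr 1
  · rw [Finset.sum_product, Finset.sum_singleton]
    simp only [pow_zero, one_mul]
    rfl
  · rw [Finset.sum_product]
    have h1 : ∀ c, ∑ x2 ∈ Finset.range k, uP ^ c * qP ^ x2 = uP ^ c * qNat k := by
      intro c
      rw [qNat, Finset.mul_sum]
    simp only [h1]
    rw [← Finset.sum_mul]
    have h2 : ∑ c ∈ Finset.Ico 1 r, uP ^ c = uP * uNat (r - 1) := by
      rw [uNat, Finset.mul_sum, Finset.sum_Ico_eq_sum_range]
      have : r - 1 = r - 1 := rfl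
      refine Finset.sum_congr rfl fun i _ => ?_
      rw [pow_add, pow_one]
    rw [h2, mul_assoc]

end CsetSec


section Main

variable {r k n : ℕ}

/-- The sorting key. -/
def keyf (k : ℕ) {n : ℕ} (φ : Fin n → ℕ × ℕ) (j : Fin n) : ℕ :=
  (k - (φ j).2) * (2 * n + 2) + brank n j (φ j).1

lemma key_lt_iff {k n x y br br' : ℕ} (hx : x ≤ k) (hy : y ≤ k)
    (hbr1 : 1 ≤ br) (hbr2 : br ≤ 2 * n) (hbr1' : 1 ≤ br') (hbr2' : br' ≤ 2 * n) :
    ((k - x) * (2 * n + 2) + br < (k - y) * (2 * n + 2) + br') ↔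
      (y < x ∨ (x = y ∧ br < br')) := by
  rcases lt_trichotomy x y with h | h | h
  · have hmul : (k - y + 1) * (2 * n + 2) ≤ (k - x) * (2 * n + 2) :=
      Nat.mul_le_mul_right _ (by omega)
    rw [add_one_mul] at hmul
    constructor <;> intro hh <;> omega
  · subst h
    constructor
    · intro hh
      right
      exact ⟨rfl, by omega⟩
    · rintro (hh | ⟨-, hh⟩)
      · omega
      · omega
  · have hmul : (k - x + 1) * (2 * n + 2) ≤ (k - y) * (2 * n + 2) :=
      Nat.mul_le_mul_right _ (by omega)
    rw [add_one_mul] at hmul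
    constructor <;> intro hh <;> omega

lemma keyf_injective {φ : Fin n → ℕ × ℕ} (hφ : ∀ j, (φ j).2 ≤ k) :
    Function.Injective (keyf k φ) := by
  intro j j' h
  unfold keyf at h
  rcases lt_trichotomy (k - (φ j).2) (k - (φ j').2) with hc | hc | hc
  · have hmul : (k - (φ j).2 + 1) * (2 * n + 2) ≤ (k - (φ j').2) * (2 * n + 2) :=
      Nat.mul_le_mul_right _ (by omega)
    rw [add_one_mul] at hmul
    have hb1 := brank_le j (φ j).1
    have hb2 := brank_pos j' (φ j').1
    omega
  · rw [hc] at h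
    exact brank_injective (Nat.add_left_cancel h)
  · have hmul : (k - (φ j').2 + 1) * (2 * n + 2) ≤ (k - (φ j).2) * (2 * n + 2) :=
      Nat.mul_le_mul_right _ (by omega)
    rw [add_one_mul] at hmul
    have hb1 := brank_le j' (φ j').1
    have hb2 := brank_pos j (φ j).1
    omega

lemma sorted_decode {φ : Fin n → ℕ × ℕ} (hφ : ∀ j, (φ j).2 ≤ k) {σ : Equiv.Perm (Fin n)}
    (hsm : StrictMono fun p => keyf k φ (σ p)) (p : ℕ) (hp : p + 1 < n) :
    (φ (σ ⟨p + 1, hp⟩)).2 < (φ (σ ⟨p, by omega⟩)).2 ∨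
      ((φ (σ ⟨p, by omega⟩)).2 = (φ (σ ⟨p + 1, hp⟩)).2 ∧
        brank n (σ ⟨p, by omega⟩) ((φ (σ ⟨p, by omega⟩)).1) <
          brank n (σ ⟨p + 1, hp⟩) ((φ (σ ⟨p + 1, hp⟩)).1)) := by
  have hlt : (⟨p, by omega⟩ : Fin n) < ⟨p + 1, hp⟩ := by
    rw [Fin.mk_lt_mk]
    omega
  have := hsm hlt
  unfold keyf at this
  rw [key_lt_iff (hφ _) (hφ _) (brank_pos _ _) (brank_le _ _) (brank_pos _ _)
    (brank_le _ _)] at this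
  exact this

/-- The backward structural lemma. -/
lemma backward_props (hn : 0 < n) (φ : Fin n → ℕ × ℕ)
    (hφ : ∀ j, (φ j).2 ≤ k ∧ ((φ j).1 = 0 ∨ (φ j).2 < k)) (σ : Equiv.Perm (Fin n))
    (hsm : StrictMono fun p => keyf k φ (σ p)) (εb : Fin n → ℕ)
    (hεb : ∀ i, εb i = (φ (σ i)).1) :
    Chain εb σ (fun p => (φ (σ p)).2) ∧ desBZ εb σ ≤ k ∧
      (∀ (p : ℕ) (hp : p < n), Dd εb σ p ≤ (φ (σ ⟨p, hp⟩)).2) ∧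
      (fun p => (φ (σ p)).2 - Dd εb σ (p : ℕ)) ∈ Dset n (k - desBZ εb σ) := by
  have hφ2 : ∀ j, (φ j).2 ≤ k := fun j => (hφ j).1
  have hchain : Chain εb σ (fun p => (φ (σ p)).2) := by
    intro p hp
    have hdec := sorted_decode hφ2 hsm p hp
    by_cases hdes : p + 1 ∈ DesBZ εb σ
    · rw [if_pos hdes]
      rw [mem_DesBZ_succ εb σ p hp] at hdes
      rw [hεb, hεb] at hdes
      rcases hdec with h | ⟨h1, h2⟩
      · simp only []
        omega
      · omega
    · rw [if_neg hdes]
      simp only []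
      omega
  have hDd : ∀ (p : ℕ) (hp : p < n), Dd εb σ p ≤ (φ (σ ⟨p, hp⟩)).2 := by
    intro p hp
    exact Dd_le_of_chain hchain p hp
  have hzero : 0 ∈ DesBZ εb σ → (φ (σ ⟨0, hn⟩)).2 < k := by
    intro h
    rw [mem_DesBZ_zero hn εb σ, hεb] at h
    rcases (hφ (σ ⟨0, hn⟩)).2 with h' | h'
    · omega
    · exact h'
  have hdesk : desBZ εb σ ≤ k := by
    rw [desBZ_eq]
    have h1 := hDd 0 hn
    have h2 := (hφ (σ ⟨0, hn⟩)).1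
    split_ifs with h
    · have := hzero h
      omega
    · omega
  refine ⟨hchain, hdesk, hDd, ?_⟩
  rw [mem_Dset]
  have hanti := antitone_of_chain
      (f := fun p : Fin n => (φ (σ p)).2 - Dd εb σ (p : ℕ)) (by
    intro p hp
    have h1 := hchain p hp
    have h2 := hDd (p + 1) hp
    have h3 : Dd εb σ p = Dd εb σ (p + 1) + (if p + 1 ∈ DesBZ εb σ then 1 else 0) :=
      Dd_succ εb σ p
    simp only [] at h1 ⊢
    omega)
  constructor
  · intro p
    have hb0 : (φ (σ p)).2 - Dd εb σ ((p : ℕ)) ≤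
        (φ (σ ⟨0, hn⟩)).2 - Dd εb σ ((⟨0, hn⟩ : Fin n) : ℕ) :=
      hanti ⟨0, hn⟩ p (by rw [Fin.le_def]; exact Nat.zero_le _)
    have hv : ((⟨0, hn⟩ : Fin n) : ℕ) = 0 := rfl
    rw [hv] at hb0
    have h1 := hDd 0 hn
    have h2 := (hφ (σ ⟨0, hn⟩)).1
    have h3 := desBZ_eq εb σ
    split_ifs at h3 with h
    · have := hzero h
      omega
    · omega
  · exact hanti

end Main


section Forward

variable {r k n : ℕ}

lemma forward_props (hn : 0 < n) (ε : Fin n → Fin r) (π : Equiv.Perm (Fin n))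
    (b : Fin n → ℕ) (hd : desBZ (fun i => (ε i : ℕ)) π ≤ k)
    (hb : b ∈ Dset n (k - desBZ (fun i => (ε i : ℕ)) π)) :
    (∀ p : Fin n, b p + Dd (fun i => (ε i : ℕ)) π (p : ℕ) ≤ k ∧
        (0 < (ε p : ℕ) → b p + Dd (fun i => (ε i : ℕ)) π (p : ℕ) < k)) ∧
      StrictMono (fun p : Fin n =>
        (k - (b p + Dd (fun i => (ε i : ℕ)) π (p : ℕ))) * (2 * n + 2) +
          brank n (π p) ((ε p : ℕ))) := by
  obtain ⟨hb1, hb2⟩ := mem_Dset.mp hb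
  have hchain : Chain (fun i => (ε i : ℕ)) π
      (fun p : Fin n => b p + Dd (fun i => (ε i : ℕ)) π (p : ℕ)) := by
    intro p hp
    have h3 := Dd_succ (fun i => (ε i : ℕ)) π p
    have hmono := hb2 ⟨p, by omega⟩ ⟨p + 1, hp⟩ (by rw [Fin.le_def]; simp)
    simp only [Fin.val_mk] at *
    omega
  have hdes3 := desBZ_eq (fun i => (ε i : ℕ)) π
  have h00 : b ⟨0, hn⟩ + Dd (fun i => (ε i : ℕ)) π 0 ≤ k := by
    have hb0 := hb1 ⟨0, hn⟩
    split_ifs at hdes3 <;> omega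
  have h00' : 0 < ((ε ⟨0, hn⟩ : ℕ)) → b ⟨0, hn⟩ + Dd (fun i => (ε i : ℕ)) π 0 < k := by
    intro hcol
    have hmem : 0 ∈ DesBZ (fun i => (ε i : ℕ)) π :=
      (mem_DesBZ_zero hn (fun i => (ε i : ℕ)) π).mpr hcol
    rw [if_pos hmem] at hdes3
    have hb0 := hb1 ⟨0, hn⟩
    omega
  have hbounds := bounds_of_chain hn hchain h00 h00'
  refine ⟨fun p => hbounds (p : ℕ) p.isLt, ?_⟩
  apply strictMono_of_chain
  intro p hp
  have hchainp := hchain p hp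
  have hbd1 := (hbounds p (by omega)).1
  have hbd2 := (hbounds (p + 1) hp).1
  simp only [Fin.val_mk] at *
  rw [key_lt_iff hbd1 hbd2 (brank_pos _ _) (brank_le _ _) (brank_pos _ _) (brank_le _ _)]
  by_cases hdes : p + 1 ∈ DesBZ (fun i => (ε i : ℕ)) π
  · rw [if_pos hdes] at hchainp
    left
    omega
  · rw [if_neg hdes] at hchainp
    rw [mem_DesBZ_succ (fun i => (ε i : ℕ)) π p hp] at hdes
    push_neg at hdes
    have hne : brank n (π ⟨p, by omega⟩) ((ε ⟨p, by omega⟩ : ℕ)) ≠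
        brank n (π ⟨p + 1, hp⟩) ((ε ⟨p + 1, hp⟩ : ℕ)) := by
      intro hcon
      have := brank_injective hcon
      have := π.injective this
      simp only [Fin.mk.injEq] at this
      omega
    have hbrlt : brank n (π ⟨p, by omega⟩) ((ε ⟨p, by omega⟩ : ℕ)) <
        brank n (π ⟨p + 1, hp⟩) ((ε ⟨p + 1, hp⟩ : ℕ)) := by omega
    rcases Nat.eq_or_lt_of_le hchainp with h | h
    · right
      exact ⟨h.symm, hbrlt⟩
    · left
      omega

end Forward


section MainCoeff

variable {n : ℕ}


lemma sigma3_ext {α β γ : Type*} {a a' : α} {b b' : β} {c c' : γ}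
    (ha : a = a') (hb : b = b') (hc : c = c') :
    (⟨a, b, c⟩ : Σ _ : α, Σ _ : β, γ) = ⟨a', b', c'⟩ := by
  subst ha; subst hb; subst hc; rfl

def Fmap {r n : ℕ} (x : Σ _ : Fin n → Fin r, Σ _ : Equiv.Perm (Fin n), Fin n → ℕ) :
    Fin n → ℕ × ℕ :=
  fun j => ((x.1 (x.2.1⁻¹ j) : ℕ),
    x.2.2 (x.2.1⁻¹ j) + Dd (fun i => (x.1 i : ℕ)) x.2.1 ((x.2.1⁻¹ j : Fin n) : ℕ))

def Gmap (r k : ℕ) {n : ℕ} (hr : 0 < r) (φ : Fin n → ℕ × ℕ) :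
    Σ _ : Fin n → Fin r, Σ _ : Equiv.Perm (Fin n), Fin n → ℕ :=
  ⟨fun p => ⟨(φ (Tuple.sort (keyf k φ) p)).1 % r, Nat.mod_lt _ hr⟩,
   Tuple.sort (keyf k φ),
   fun p => (φ (Tuple.sort (keyf k φ) p)).2 -
     Dd (fun i => (φ (Tuple.sort (keyf k φ) i)).1 % r) (Tuple.sort (keyf k φ)) (p : ℕ)⟩

lemma main_coeff (r k : ℕ) {n : ℕ} (hr : 0 < r) (hn : 0 < n) :
    ((∑ x ∈ Cset r k, uP ^ x.1 * qP ^ x.2) : MvPolynomial (Fin 2) ℤ) ^ n =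
      ∑ ε : Fin n → Fin r, ∑ π : Equiv.Perm (Fin n),
        qP ^ majBZ (fun i => (ε i : ℕ)) π * uP ^ colwt (fun i => (ε i : ℕ)) *
          (if desBZ (fun i => (ε i : ℕ)) π ≤ k
           then ∑ b ∈ Dset n (k - desBZ (fun i => (ε i : ℕ)) π), qP ^ (∑ p, b p)
           else 0) := by
  rw [Finset.sum_pow']
  have step1 : (∑ x ∈ (Finset.univ.sigma fun ε : Fin n → Fin r =>
        Finset.univ.sigma fun π : Equiv.Perm (Fin n) =>
          if desBZ (fun i => (ε i : ℕ)) π ≤ k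
          then Dset n (k - desBZ (fun i => (ε i : ℕ)) π) else ∅),
        qP ^ majBZ (fun i => (x.1 i : ℕ)) x.2.1 * uP ^ colwt (fun i => (x.1 i : ℕ)) *
          qP ^ (∑ p, x.2.2 p)) =
      ∑ ε : Fin n → Fin r, ∑ π : Equiv.Perm (Fin n),
        qP ^ majBZ (fun i => (ε i : ℕ)) π * uP ^ colwt (fun i => (ε i : ℕ)) *
          (if desBZ (fun i => (ε i : ℕ)) π ≤ k
           then ∑ b ∈ Dset n (k - desBZ (fun i => (ε i : ℕ)) π), qP ^ (∑ p, b p)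
           else 0) := by
    rw [Finset.sum_sigma]
    refine Finset.sum_congr rfl fun ε _ => ?_
    rw [Finset.sum_sigma]
    refine Finset.sum_congr rfl fun π _ => ?_
    split_ifs with h
    · rw [Finset.mul_sum]
    · simp
  rw [← step1]
  symm
  refine Finset.sum_nbij' (fun x => Fmap x) (fun φ => Gmap r k hr φ) ?_ ?_ ?_ ?_ ?_
  · -- maps into piFinset
    rintro ⟨ε, π, b⟩ hx
    rw [Finset.mem_sigma] at hx
    obtain ⟨-, hx⟩ := hx
    rw [Finset.mem_sigma] at hx
    obtain ⟨-, hx⟩ := hx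
    dsimp only at hx
    split_ifs at hx with hd
    · rw [Fintype.mem_piFinset]
      intro j
      rw [mem_Cset]
      have hprops := (forward_props hn ε π b hd hx).1 (π⁻¹ j)
      simp only [Fmap]
      refine ⟨(ε (π⁻¹ j)).isLt, hprops.1, ?_⟩
      by_cases hc : (ε (π⁻¹ j) : ℕ) = 0
      · exact Or.inl hc
      · exact Or.inr (hprops.2 (by omega))
    · exact absurd hx (Finset.notMem_empty _)
  · -- Gmap maps into sigma set
    intro φ hφm
    rw [Fintype.mem_piFinset] at hφm
    have hφ' : ∀ j, (φ j).2 ≤ k ∧ ((φ j).1 = 0 ∨ (φ j).2 < k) := by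
      intro j
      have := mem_Cset.mp (hφm j)
      exact ⟨this.2.1, this.2.2⟩
    have hφ1 : ∀ j, (φ j).1 < r := fun j => (mem_Cset.mp (hφm j)).1
    have hsm : StrictMono fun p => keyf k φ (Tuple.sort (keyf k φ) p) := by
      have hmono : Monotone (keyf k φ ∘ Tuple.sort (keyf k φ)) :=
        Tuple.monotone_sort (keyf k φ)
      have hinj : Function.Injective (keyf k φ ∘ Tuple.sort (keyf k φ)) :=
        (keyf_injective fun j => (hφ' j).1).comp (Tuple.sort (keyf k φ)).injective
      exact Monotone.strictMono_of_injective hmono hinj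
    have hεb : ∀ i, (φ (Tuple.sort (keyf k φ) i)).1 % r = (φ (Tuple.sort (keyf k φ) i)).1 :=
      fun i => Nat.mod_eq_of_lt (hφ1 _)
    obtain ⟨hch, hdesk, hDdle, hbmem⟩ := backward_props hn φ hφ' (Tuple.sort (keyf k φ)) hsm
      (fun i => (φ (Tuple.sort (keyf k φ) i)).1 % r) hεb
    rw [Finset.mem_sigma]
    refine ⟨Finset.mem_univ _, ?_⟩
    rw [Finset.mem_sigma]
    refine ⟨Finset.mem_univ _, ?_⟩
    simp only [Gmap, Fin.val_mk]
    convert hbmem using 2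
    exact if_pos hdesk
  · -- left inverse
    rintro ⟨ε, π, b⟩ hx
    rw [Finset.mem_sigma] at hx
    obtain ⟨-, hx⟩ := hx
    rw [Finset.mem_sigma] at hx
    obtain ⟨-, hx⟩ := hx
    dsimp only at hx
    split_ifs at hx with hd
    swap
    · exact absurd hx (Finset.notMem_empty _)
    have hφapp : ∀ p : Fin n, Fmap (⟨ε, π, b⟩ : Σ _ : Fin n → Fin r,
        Σ _ : Equiv.Perm (Fin n), Fin n → ℕ) (π p) =
        (((ε p : ℕ)), b p + Dd (fun i => ((ε i : ℕ))) π ((p : Fin n) : ℕ)) := by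
      intro p
      simp only [Fmap, Equiv.Perm.coe_inv, Equiv.symm_apply_apply]
    have hsm' := (forward_props hn ε π b hd hx).2
    have hkeyeq : (fun p => keyf k (Fmap ⟨ε, π, b⟩) (π p)) = fun p : Fin n =>
        (k - (b p + Dd (fun i => ((ε i : ℕ))) π ((p : Fin n) : ℕ))) * (2 * n + 2) +
          brank n (π p) ((ε p : ℕ)) := by
      funext p
      rw [keyf, hφapp p]
    have hsm : StrictMono fun p => keyf k (Fmap ⟨ε, π, b⟩) (π p) := by
      rw [hkeyeq]
      exact hsm'
    have hπ : π = Tuple.sort (keyf k (Fmap ⟨ε, π, b⟩)) := by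
      rw [Tuple.eq_sort_iff]
      exact ⟨hsm.monotone, fun i j hij hfe => absurd hfe (ne_of_lt (hsm hij))⟩
    simp only [Gmap, ← hπ]
    refine sigma3_ext ?_ rfl ?_
    · funext p
      apply Fin.ext
      simp only [Fin.val_mk]
      rw [hφapp p]
      exact Nat.mod_eq_of_lt (ε p).isLt
    · funext p
      have hmodε : (fun i => (Fmap (⟨ε, π, b⟩ : Σ _ : Fin n → Fin r,
          Σ _ : Equiv.Perm (Fin n), Fin n → ℕ) (π i)).1 % r) = (fun i => ((ε i : ℕ))) := by
        funext i
        rw [hφapp i]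
        exact Nat.mod_eq_of_lt (ε i).isLt
      rw [hmodε, hφapp p]
      exact Nat.add_sub_cancel _ _
  · -- right inverse
    intro φ hφm
    rw [Fintype.mem_piFinset] at hφm
    have hφ' : ∀ j, (φ j).2 ≤ k ∧ ((φ j).1 = 0 ∨ (φ j).2 < k) := by
      intro j
      have := mem_Cset.mp (hφm j)
      exact ⟨this.2.1, this.2.2⟩
    have hφ1 : ∀ j, (φ j).1 < r := fun j => (mem_Cset.mp (hφm j)).1
    have hsm : StrictMono fun p => keyf k φ (Tuple.sort (keyf k φ) p) := by
      have hmono : Monotone (keyf k φ ∘ Tuple.sort (keyf k φ)) :=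
        Tuple.monotone_sort (keyf k φ)
      have hinj : Function.Injective (keyf k φ ∘ Tuple.sort (keyf k φ)) :=
        (keyf_injective fun j => (hφ' j).1).comp (Tuple.sort (keyf k φ)).injective
      exact Monotone.strictMono_of_injective hmono hinj
    have hεb : ∀ i, (φ (Tuple.sort (keyf k φ) i)).1 % r = (φ (Tuple.sort (keyf k φ) i)).1 :=
      fun i => Nat.mod_eq_of_lt (hφ1 _)
    obtain ⟨hch, hdesk, hDdle, hbmem⟩ := backward_props hn φ hφ' (Tuple.sort (keyf k φ)) hsm
      (fun i => (φ (Tuple.sort (keyf k φ) i)).1 % r) hεb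
    funext j
    simp only [Fmap, Gmap, Fin.val_mk, Equiv.Perm.coe_inv, Equiv.apply_symm_apply]
    have hle : Dd (fun i => (φ (Tuple.sort (keyf k φ) i)).1 % r) (Tuple.sort (keyf k φ))
        (((Tuple.sort (keyf k φ))⁻¹ j : Fin n) : ℕ) ≤ (φ j).2 := by
      have h1 := hDdle (((Tuple.sort (keyf k φ))⁻¹ j : Fin n) : ℕ)
        ((Tuple.sort (keyf k φ))⁻¹ j).isLt
      have h2 : (⟨(((Tuple.sort (keyf k φ))⁻¹ j : Fin n) : ℕ),
          ((Tuple.sort (keyf k φ))⁻¹ j).isLt⟩ : Fin n) = (Tuple.sort (keyf k φ))⁻¹ j :=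
        Fin.eta _ _
      rw [h2, Equiv.Perm.coe_inv, Equiv.apply_symm_apply] at h1
      exact h1
    have hfst : (φ j).1 % r = (φ j).1 := Nat.mod_eq_of_lt (hφ1 j)
    rw [Prod.ext_iff]
    exact ⟨hfst, Nat.sub_add_cancel hle⟩
  · -- weights
    rintro ⟨ε, π, b⟩ hx
    simp only [Fmap]
    have hreindex := Equiv.prod_comp (π⁻¹ : Equiv.Perm (Fin n))
      (fun p : Fin n => uP ^ ((ε p : ℕ)) * qP ^ (b p + Dd (fun i => (ε i : ℕ)) π (p : ℕ)))
    rw [hreindex]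
    rw [Finset.prod_mul_distrib, Finset.prod_pow_eq_pow_sum, Finset.prod_pow_eq_pow_sum]
    have hmaj : ∑ i : Fin n, Dd (fun i => ((ε i : ℕ))) π ((i : Fin n) : ℕ) =
        majBZ (fun i => ((ε i : ℕ))) π := by
      rw [Fin.sum_univ_eq_sum_range (fun i => Dd (fun i => ((ε i : ℕ))) π i) n]
      exact sum_Dd _ _
    rw [Finset.sum_add_distrib, hmaj]
    have hcol : colwt (fun i => ((ε i : ℕ))) = ∑ i : Fin n, ((ε i : ℕ)) := rfl
    rw [hcol, pow_add]
    ring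

end MainCoeff

end BZ

theorem wreath_identity (r n : ℕ) (hr : 0 < r) (hn : 0 < n) :
    (PowerSeries.mk fun k => (qNat (k + 1) + uP * uNat (r - 1) * qNat k) ^ n) *
        ∏ j ∈ Finset.range (n + 1),
          (1 - PowerSeries.C (qP ^ j) * PowerSeries.X) =
      ∑ ε : Fin n → Fin r, ∑ π : Equiv.Perm (Fin n),
        PowerSeries.C
            (qP ^ majBZ (fun i => (ε i : ℕ)) π * uP ^ colwt (fun i => (ε i : ℕ))) *
          PowerSeries.X ^ desBZ (fun i => (ε i : ℕ)) π := by
  have key : (PowerSeries.mk fun k => (qNat (k + 1) + uP * uNat (r - 1) * qNat k) ^ n) =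
      (∑ ε : Fin n → Fin r, ∑ π : Equiv.Perm (Fin n),
        PowerSeries.C
            (qP ^ majBZ (fun i => (ε i : ℕ)) π * uP ^ colwt (fun i => (ε i : ℕ))) *
          PowerSeries.X ^ desBZ (fun i => (ε i : ℕ)) π) * BZ.Pinv n := by
    apply PowerSeries.ext
    intro k
    have hco : ∀ (ε : Fin n → Fin r) (π : Equiv.Perm (Fin n)),
        PowerSeries.coeff k
          ((PowerSeries.C
              (qP ^ majBZ (fun i => (ε i : ℕ)) π * uP ^ colwt (fun i => (ε i : ℕ))) *
            PowerSeries.X ^ desBZ (fun i => (ε i : ℕ)) π) * BZ.Pinv n)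
        = qP ^ majBZ (fun i => (ε i : ℕ)) π * uP ^ colwt (fun i => (ε i : ℕ)) *
            (if desBZ (fun i => (ε i : ℕ)) π ≤ k
             then ∑ b ∈ BZ.Dset n (k - desBZ (fun i => (ε i : ℕ)) π), qP ^ (∑ p, b p)
             else 0) := by
      intro ε π
      rw [mul_assoc, PowerSeries.coeff_C_mul, PowerSeries.coeff_X_pow_mul']
      congr 1
      split_ifs with h
      · rw [BZ.coeff_Pinv]
      · rfl
    rw [PowerSeries.coeff_mk, Finset.sum_mul]
    rw [map_sum]
    have hterm : ∀ ε : Fin n → Fin r,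
        PowerSeries.coeff k
          ((∑ π : Equiv.Perm (Fin n),
            PowerSeries.C
                (qP ^ majBZ (fun i => (ε i : ℕ)) π * uP ^ colwt (fun i => (ε i : ℕ))) *
              PowerSeries.X ^ desBZ (fun i => (ε i : ℕ)) π) * BZ.Pinv n)
        = ∑ π : Equiv.Perm (Fin n),
            qP ^ majBZ (fun i => (ε i : ℕ)) π * uP ^ colwt (fun i => (ε i : ℕ)) *
              (if desBZ (fun i => (ε i : ℕ)) π ≤ k
               then ∑ b ∈ BZ.Dset n (k - desBZ (fun i => (ε i : ℕ)) π), qP ^ (∑ p, b p)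
               else 0) := by
      intro ε
      rw [Finset.sum_mul, map_sum]
      exact Finset.sum_congr rfl fun π _ => hco ε π
    simp only [hterm]
    rw [BZ.cset_sum r k hr]
    exact BZ.main_coeff r k hr hn
  rw [key, mul_assoc, mul_comm (BZ.Pinv n), BZ.prod_mul_Pinv, mul_one]
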